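/- Let A be an n×n complex matrix, u, v ∈ ℂⁿ, τ₀ ∈ ℂ nonzero, and let λ₀ ∈ ℂ not be an eigenvalue of A. Define Q(λ) = v*(λIₙ − A)⁻¹u. Then λ₀ is an eigenvalue of B(τ₀) = A + τ₀ u v* of algebraic multiplicity κ ≥ 1 (i.e., λ₀ is a root of the characteristic polynomial of B(τ₀) of multiplicity exactly κ) if and only if τ₀Q(λ₀) = 1, Q′(λ₀) = 0, …, Q^{(κ−1)}(λ₀) = 0, and Q^{(κ)}(λ₀) ≠ 0. -/

import Mathlib

open Matrix Polynomial Filter Topology Nat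

private lemma iteratedDeriv_eq_factorial_mul_coeff {f : ℂ → ℂ}
    {p : FormalMultilinearSeries ℂ ℂ ℂ} {x : ℂ}
    (hp : HasFPowerSeriesAt f p x) (m : ℕ) :
    iteratedDeriv m f x = m ! * p.coeff m := by
  obtain ⟨r, hr⟩ := hp
  have h := hr.factorial_smul (1 : ℂ) m
  rw [iteratedDeriv, ← h, FormalMultilinearSeries.coeff, nsmul_eq_mul]
  norm_num [Pi.one_def]

private lemma order_eq_order_of_ne {f : ℂ → ℂ} {p : FormalMultilinearSeries ℂ ℂ ℂ} {x : ℂ}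
    (hf : AnalyticAt ℂ f x) (hp : HasFPowerSeriesAt f p x) (h : p ≠ 0) :
    analyticOrderAt f x = p.order := by
  rw [hf.analyticOrderAt_eq_natCast]
  exact ⟨_, ⟨_, hp.has_fpower_series_iterate_dslope_fslope p.order⟩,
    hp.iterate_dslope_fslope_ne_zero h,
    Filter.Eventually.of_forall hp.eq_pow_order_mul_iterate_dslope⟩

private lemma order_eq_nat_iff_iteratedDeriv {f : ℂ → ℂ} {x : ℂ}
    (hf : AnalyticAt ℂ f x) (m : ℕ) :
    analyticOrderAt f x = (m : ℕ∞) ↔ (∀ j < m, iteratedDeriv j f x = 0) ∧ iteratedDeriv m f x ≠ 0 := by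
  obtain ⟨p, hp⟩ := id hf
  have hiter := fun j => iteratedDeriv_eq_factorial_mul_coeff hp j
  by_cases h : p = 0
  · constructor
    · intro h0
      exfalso
      have ht : analyticOrderAt f x = ⊤ :=
        analyticOrderAt_eq_top.mpr (HasFPowerSeriesAt.eventually_eq_zero (h ▸ hp))
      rw [h0] at ht
      exact (ENat.coe_ne_top m) ht
    · rintro ⟨-, h2⟩
      exact absurd (by simp [hiter m, h, FormalMultilinearSeries.coeff]) h2
  · have hord : analyticOrderAt f x = p.order := order_eq_order_of_ne hf hp h
    have hzero : ∀ j < p.order, iteratedDeriv j f x = 0 := fun j hj => by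
      rw [hiter j, FormalMultilinearSeries.coeff_eq_zero.mpr
        (FormalMultilinearSeries.apply_eq_zero_of_lt_order hj), mul_zero]
    have hne : iteratedDeriv p.order f x ≠ 0 := by
      rw [hiter]
      exact mul_ne_zero (Nat.cast_ne_zero.mpr (Nat.factorial_ne_zero _))
        (fun hc => FormalMultilinearSeries.apply_order_ne_zero h
          (FormalMultilinearSeries.coeff_eq_zero.mp hc))
    constructor
    · intro h0
      have hm : m = p.order := by
        rw [hord] at h0
        exact_mod_cast h0.symm
      subst hm
      exact ⟨hzero, hne⟩
    · rintro ⟨h1, h2⟩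
      have hm : m = p.order := by
        rcases lt_trichotomy m p.order with hlt | heq | hgt
        · exact absurd (hzero m hlt) h2
        · exact heq
        · exact absurd (h1 _ hgt) hne
      rw [hord, hm]

private lemma order_congr' {f g : ℂ → ℂ} {x : ℂ} (hf : AnalyticAt ℂ f x)
    (hg : AnalyticAt ℂ g x) (h : f =ᶠ[𝓝 x] g) : analyticOrderAt f x = analyticOrderAt g x := by
  by_cases htop : analyticOrderAt g x = ⊤
  · rw [htop, analyticOrderAt_eq_top]
    exact (analyticOrderAt_eq_top.mp htop).congr (by filter_upwards [h] with z hz using by rw [hz])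
  · obtain ⟨m, hm⟩ := WithTop.ne_top_iff_exists.mp htop
    have hm' : analyticOrderAt g x = (m : ℕ∞) := by exact_mod_cast hm.symm
    rw [hm', hf.analyticOrderAt_eq_natCast]
    obtain ⟨r, hr1, hr2, hr3⟩ := hg.analyticOrderAt_eq_natCast.mp hm'
    exact ⟨r, hr1, hr2, by filter_upwards [h, hr3] with z h1 h2 using h1.trans h2⟩

private lemma order_unit_mul {g h : ℂ → ℂ} {x : ℂ} (hg : AnalyticAt ℂ g x)
    (hh : AnalyticAt ℂ h x) (hg0 : g x ≠ 0)
    (hgh : AnalyticAt ℂ (fun z => g z * h z) x) :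
    analyticOrderAt (fun z => g z * h z) x = analyticOrderAt h x := by
  by_cases htop : analyticOrderAt h x = ⊤
  · rw [htop, analyticOrderAt_eq_top]
    filter_upwards [analyticOrderAt_eq_top.mp htop] with z hz
    simp [hz]
  · obtain ⟨m, hm⟩ := WithTop.ne_top_iff_exists.mp htop
    have hm' : analyticOrderAt h x = (m : ℕ∞) := by exact_mod_cast hm.symm
    obtain ⟨r, hr1, hr2, hr3⟩ := hh.analyticOrderAt_eq_natCast.mp hm'
    rw [hm', hgh.analyticOrderAt_eq_natCast]
    refine ⟨fun z => g z * r z, hg.mul hr1, mul_ne_zero hg0 hr2, ?_⟩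
    filter_upwards [hr3] with z hz
    rw [hz]
    simp [smul_eq_mul]
    ring

private lemma iteratedDeriv_const_sub_mul' {q : ℂ → ℂ} {x : ℂ} (hq : AnalyticAt ℂ q x)
    (a c : ℂ) {n : ℕ} (hn : 1 ≤ n) :
    iteratedDeriv n (fun z => a - c * q z) x = -c * iteratedDeriv n q x := by
  obtain ⟨s, hss, hso, hxs⟩ := mem_nhds_iff.mp hq.eventually_analyticAt
  have hqs : AnalyticOnNhd ℂ q s := fun y hy => hss hy
  have key : ∀ k, 1 ≤ k →
      Set.EqOn (deriv^[k] (fun z => a - c * q z)) (fun y => -c * deriv^[k] q y) s := by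
    intro k hk
    induction k, hk using Nat.le_induction with
    | base =>
      intro y hy
      simp only [Function.iterate_one]
      rw [deriv_const_sub, deriv_const_mul c ((hqs y hy).differentiableAt)]
      ring
    | succ k hk ih =>
      intro y hy
      have hev : deriv^[k] (fun z => a - c * q z) =ᶠ[𝓝 y]
          fun w => -c * deriv^[k] q w :=
        eventually_of_mem (hso.mem_nhds hy) ih
      rw [Function.iterate_succ_apply', hev.deriv_eq,
        deriv_const_mul (-c) ((hqs.iterated_deriv k y hy).differentiableAt),
        Function.iterate_succ_apply']
  rw [iteratedDeriv_eq_iterate, iteratedDeriv_eq_iterate]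
  exact key n hn hxs

private lemma cp_eval {n : ℕ} (M : Matrix (Fin n) (Fin n) ℂ) (z : ℂ) :
    M.charpoly.eval z = (z • (1 : Matrix (Fin n) (Fin n) ℂ) - M).det := by
  rw [Matrix.charpoly, eval_det, matPolyEquiv_charmatrix]
  congr 1
  simp [Matrix.scalar, Matrix.smul_eq_diagonal_mul]

private lemma det_sub_smul_vecMulVec {n : ℕ} (M : Matrix (Fin n) (Fin n) ℂ)
    (u w : Fin n → ℂ) (τ : ℂ) (hM : IsUnit M.det) :
    (M - τ • vecMulVec u w).det = M.det * (1 - τ * (w ⬝ᵥ M⁻¹.mulVec u)) := by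
  have h1 : M - τ • vecMulVec u w = M + replicateCol (Fin 1) ((-τ) • u) * replicateRow (Fin 1) w := by
    ext i j
    simp [Matrix.mul_apply, vecMulVec_apply, Matrix.replicateCol, Matrix.replicateRow, sub_eq_add_neg]
    ring
  rw [h1, det_add_mul _ _ hM]
  congr 1
  rw [Matrix.det_fin_one, Matrix.add_apply, one_apply_eq]
  have h2 : (replicateRow (Fin 1) w * M⁻¹ * replicateCol (Fin 1) (-τ • u)) 0 0
      = w ⬝ᵥ M⁻¹.mulVec (-τ • u) := by
    rw [Matrix.mul_assoc, ← replicateCol_mulVec, replicateRow_mul_replicateCol_apply]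
  rw [h2]
  rw [Matrix.mulVec_smul, dotProduct_smul, smul_eq_mul]
  ring

theorem stmt2 {n : ℕ} (A : Matrix (Fin n) (Fin n) ℂ) (u v : Fin n → ℂ) (τ₀ : ℂ)
    (hτ : τ₀ ≠ 0) (lam₀ : ℂ) (hlam : lam₀ ∉ spectrum ℂ A) (κ : ℕ) (hκ : 1 ≤ κ) :
    (A + τ₀ • vecMulVec u (star v)).charpoly.rootMultiplicity lam₀ = κ ↔
      (τ₀ * (star v ⬝ᵥ (lam₀ • (1 : Matrix (Fin n) (Fin n) ℂ) - A)⁻¹.mulVec u) = 1 ∧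
       (∀ j, 1 ≤ j → j < κ →
         iteratedDeriv j
           (fun z : ℂ => star v ⬝ᵥ (z • (1 : Matrix (Fin n) (Fin n) ℂ) - A)⁻¹.mulVec u) lam₀ = 0) ∧
       iteratedDeriv κ
         (fun z : ℂ => star v ⬝ᵥ (z • (1 : Matrix (Fin n) (Fin n) ℂ) - A)⁻¹.mulVec u) lam₀ ≠ 0) := by
  set B := A + τ₀ • vecMulVec u (star v) with hB
  set q : ℂ → ℂ := fun z => star v ⬝ᵥ (z • (1 : Matrix (Fin n) (Fin n) ℂ) - A)⁻¹.mulVec u with hqdef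
  set G : ℂ → ℂ := fun z => A.charpoly.eval z with hGdef
  set F : ℂ → ℂ := fun z => B.charpoly.eval z with hFdef
  -- analyticity of polynomial evaluations
  have hG_an : AnalyticAt ℂ G lam₀ := by
    have := (analyticAt_id : AnalyticAt ℂ id lam₀).aeval_polynomial A.charpoly
    simpa [hGdef, Polynomial.coe_aeval_eq_eval] using this
  have hF_an : AnalyticAt ℂ F lam₀ := by
    have := (analyticAt_id : AnalyticAt ℂ id lam₀).aeval_polynomial B.charpoly
    simpa [hFdef, Polynomial.coe_aeval_eq_eval] using this
  -- nonvanishing of G at lam₀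
  have hG0 : G lam₀ ≠ 0 := by
    rw [hGdef]
    simp only
    rw [cp_eval]
    rw [spectrum.mem_iff, not_not] at hlam
    rw [Algebra.algebraMap_eq_smul_one] at hlam
    exact ((Matrix.isUnit_iff_isUnit_det _).mp hlam).ne_zero
  have hGnhds : ∀ᶠ z in 𝓝 lam₀, G z ≠ 0 := hG_an.continuousAt.eventually_ne hG0
  -- the determinant identity
  have hdet : ∀ z : ℂ, G z ≠ 0 → F z = G z * (1 - τ₀ * q z) := by
    intro z hz
    have hMz : IsUnit (z • (1 : Matrix (Fin n) (Fin n) ℂ) - A).det := by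
      rw [hGdef] at hz
      simp only at hz
      rw [cp_eval] at hz
      exact isUnit_iff_ne_zero.mpr hz
    have h1 : z • (1 : Matrix (Fin n) (Fin n) ℂ) - B
        = (z • (1 : Matrix (Fin n) (Fin n) ℂ) - A) - τ₀ • vecMulVec u (star v) := by
      rw [hB, sub_add_eq_sub_sub]
    calc F z = (z • (1 : Matrix (Fin n) (Fin n) ℂ) - B).det := cp_eval B z
      _ = ((z • (1 : Matrix (Fin n) (Fin n) ℂ) - A) - τ₀ • vecMulVec u (star v)).det := by
          rw [h1]
      _ = (z • (1 : Matrix (Fin n) (Fin n) ℂ) - A).det * (1 - τ₀ * q z) :=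
          det_sub_smul_vecMulVec _ u (star v) τ₀ hMz
      _ = G z * (1 - τ₀ * q z) := by rw [hGdef]; simp only; rw [cp_eval]
  -- q is analytic at lam₀
  have hq_an : AnalyticAt ℂ q lam₀ := by
    have hr_an : AnalyticAt ℂ (fun z => (G z - F z) / (τ₀ * G z)) lam₀ :=
      (hG_an.sub hF_an).div (analyticAt_const.mul hG_an) (mul_ne_zero hτ hG0)
    apply hr_an.congr
    filter_upwards [hGnhds] with z hz
    have h5 := hdet z hz
    field_simp
    linear_combination -h5
  have hh_an : AnalyticAt ℂ (fun z => 1 - τ₀ * q z) lam₀ :=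
    analyticAt_const.sub (analyticAt_const.mul hq_an)
  have hGh_an : AnalyticAt ℂ (fun z => G z * (1 - τ₀ * q z)) lam₀ := hG_an.mul hh_an
  -- orders
  have hord1 : analyticOrderAt F lam₀ = analyticOrderAt (fun z => G z * (1 - τ₀ * q z)) lam₀ := by
    apply order_congr' hF_an hGh_an
    filter_upwards [hGnhds] with z hz using hdet z hz
  have hord2 : analyticOrderAt (fun z => G z * (1 - τ₀ * q z)) lam₀ =
      analyticOrderAt (fun z => 1 - τ₀ * q z) lam₀ := order_unit_mul hG_an hh_an hG0 hGh_an
  -- the order of F equals the root multiplicity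
  have hPne : B.charpoly ≠ 0 := B.charpoly_monic.ne_zero
  set m := B.charpoly.rootMultiplicity lam₀ with hmdef
  have hFord : analyticOrderAt F lam₀ = (m : ℕ∞) := by
    rw [hF_an.analyticOrderAt_eq_natCast]
    refine ⟨fun z => (B.charpoly /ₘ (X - C lam₀) ^ m).eval z, ?_, ?_, ?_⟩
    · have := (analyticAt_id : AnalyticAt ℂ id lam₀).aeval_polynomial
        (B.charpoly /ₘ (X - C lam₀) ^ m)
      simpa [Polynomial.coe_aeval_eq_eval] using this
    · exact eval_divByMonic_pow_rootMultiplicity_ne_zero lam₀ hPne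
    · apply Filter.Eventually.of_forall
      intro z
      conv_lhs => rw [hFdef]
      simp only
      conv_lhs => rw [← pow_mul_divByMonic_rootMultiplicity_eq B.charpoly lam₀]
      simp [smul_eq_mul]
      rfl
  -- translate the iterated derivative conditions
  have htrans : analyticOrderAt (fun z => 1 - τ₀ * q z) lam₀ = (κ : ℕ∞) ↔
      (τ₀ * q lam₀ = 1 ∧ (∀ j, 1 ≤ j → j < κ → iteratedDeriv j q lam₀ = 0) ∧
        iteratedDeriv κ q lam₀ ≠ 0) := by
    rw [order_eq_nat_iff_iteratedDeriv hh_an κ]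
    constructor
    · rintro ⟨h1, h2⟩
      refine ⟨?_, ?_, ?_⟩
      · have h0 := h1 0 (lt_of_lt_of_le zero_lt_one hκ)
        rw [iteratedDeriv_zero] at h0
        have : (1 : ℂ) - τ₀ * q lam₀ = 0 := h0
        linear_combination -this
      · intro j hj1 hj2
        have := h1 j hj2
        rw [iteratedDeriv_const_sub_mul' hq_an 1 τ₀ hj1] at this
        exact (mul_eq_zero.mp this).resolve_left (neg_ne_zero.mpr hτ)
      · intro hc
        apply h2
        rw [iteratedDeriv_const_sub_mul' hq_an 1 τ₀ hκ, hc, mul_zero]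
    · rintro ⟨h1, h2, h3⟩
      constructor
      · intro j hj
        rcases Nat.eq_zero_or_pos j with rfl | hj1
        · rw [iteratedDeriv_zero]
          show (1 : ℂ) - τ₀ * q lam₀ = 0
          rw [h1, sub_self]
        · rw [iteratedDeriv_const_sub_mul' hq_an 1 τ₀ hj1, h2 j hj1 hj, mul_zero]
      · rw [iteratedDeriv_const_sub_mul' hq_an 1 τ₀ hκ]
        exact mul_ne_zero (neg_ne_zero.mpr hτ) h3
  -- conclude
  rw [← htrans, ← hord2, ← hord1]
  constructor
  · intro hmk
    rw [hFord, hmk]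
  · intro hk
    rw [hFord] at hk
    exact_mod_cast hk
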